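/- arXiv:2102.09901 — 2 statements merged into one kernel-verified Lean document; each statement's English description precedes it below -/
import Mathlib

section
/- Let M be a matroid on a finite set E in which every set in a family X of subsets of E is a circuit, and let F ⊆ E. For any proper X-sequence S = (X₁,…,X_k) (meaning each Xᵢ ∈ X and Xᵢ ⊄ X₁∪…∪X_{i-1} for all i ≥ 2), the rank of F in M satisfies r_M(F) ≤ |F ∪ (X₁∪…∪X_k)| − k. -/
open Set

variable {α : Type*}

/-- `C` is a circuit of `M`: a minimal dependent subset of the ground set. -/
def Matroid.IsCircuit' (M : Matroid α) (C : Set α) : Prop :=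
  C ⊆ M.E ∧ ¬ M.Indep C ∧ ∀ e ∈ C, M.Indep (C \ {e})

/-- `M` is an `X`-matroid on `E`: a matroid with ground set `E` in which every member of the
family `X` is a circuit. -/
def IsXMatroid (E : Set α) (X : Set (Set α)) (M : Matroid α) : Prop :=
  M.E = E ∧ ∀ C ∈ X, M.IsCircuit' C

/-- The union of a list of sets. -/
def unionList (S : List (Set α)) : Set α := ⋃ Y ∈ S, Y

/-- A proper `X`-sequence: a list of members of `X` such that no term is contained in the
union of the preceding terms. -/
def ProperSeq (X : Set (Set α)) (S : List (Set α)) : Prop :=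
  (∀ Y ∈ S, Y ∈ X) ∧
  ∀ i : Fin S.length, 0 < i.1 → ¬ (S.get i ⊆ unionList (S.take i.1))

/-- `val(F, S) = |F ∪ ⋃ S| - |S|`. -/
noncomputable def valSeq (F : Set α) (S : List (Set α)) : ℤ :=
  ((F ∪ unionList S).ncard : ℤ) - S.length

/-- `val_X(F)`: the minimum of `val(F, S)` over all proper `X`-sequences `S`. -/
noncomputable def valX (X : Set (Set α)) (F : Set α) : ℤ :=
  sInf {v : ℤ | ∃ S : List (Set α), ProperSeq X S ∧ v = valSeq F S}

/-- The rank of a set `F` in a matroid `M`: the largest size of an independent subset of `F`. -/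
noncomputable def mrk (M : Matroid α) (F : Set α) : ℕ :=
  sSup {n : ℕ | ∃ I ⊆ F, M.Indep I ∧ I.ncard = n}

/-- The weak order on matroids: `M ⪯ N` iff every independent set of `M` is independent in `N`. -/
def WeakLE (M N : Matroid α) : Prop := ∀ I : Set α, M.Indep I → N.Indep I

lemma unionList_append (T : List (Set α)) (Y : Set α) :
    unionList (T ++ [Y]) = unionList T ∪ Y := by
  simp [unionList, iUnion_or, iUnion_union_distrib]

lemma indep_encard_le_of_subset_closure {M : Matroid α} {I J : Set α} (hI : M.Indep I)
    (hJ : M.Indep J) (hIJ : I ⊆ M.closure J) : I.encard ≤ J.encard := by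
  by_contra h
  push_neg at h
  obtain ⟨e, he, hins⟩ := hJ.augment hI h
  exact ((hJ.insert_indep_iff_of_notMem he.2).mp hins).2 (hIJ he.1)

lemma properSeq_append {X : Set (Set α)} {T : List (Set α)} {Y : Set α}
    (h : ProperSeq X (T ++ [Y])) : ProperSeq X T := by
  refine ⟨fun Z hZ => h.1 Z (by simp [hZ]), fun i hi => ?_⟩
  have hlen : i.1 < (T ++ [Y]).length := by
    have := i.2; simp only [List.length_append, List.length_singleton]; omega
  have h2 := h.2 ⟨i.1, hlen⟩ hi
  simpa [List.get_eq_getElem, List.getElem_append_left,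
    List.take_append_of_le_length (le_of_lt i.2)] using h2

lemma properSeq_last {X : Set (Set α)} {T : List (Set α)} {Y : Set α}
    (h : ProperSeq X (T ++ [Y])) (hT : 0 < T.length) : ¬ (Y ⊆ unionList T) := by
  have hlen : T.length < (T ++ [Y]).length := by simp
  have h2 := h.2 ⟨T.length, hlen⟩ hT
  simpa [List.get_eq_getElem, List.getElem_concat_length, List.take_left] using h2

/-- Main lemma: a basis of the union of a proper sequence leaves nullity at least `S.length`. -/
lemma basis_encard_add_length_le {E : Set α} {X : Set (Set α)}
    (hXE : ∀ Y ∈ X, Y ⊆ E) {M : Matroid α} (hM : IsXMatroid E X M) :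
    ∀ S : List (Set α), ProperSeq X S → ∀ J, M.IsBasis J (unionList S) →
      J.encard + S.length ≤ (unionList S).encard := by
  intro S
  induction S using List.reverseRecOn with
  | nil =>
    intro _ J hJ
    have : J ⊆ (∅ : Set α) := by simpa [unionList] using hJ.subset
    simp [subset_empty_iff.mp this]
  | append_singleton T Y ih =>
    intro hS J' hJ'
    rw [unionList_append] at hJ' ⊢
    obtain ⟨hME, hcirc⟩ := hM
    have hT : ProperSeq X T := properSeq_append hS
    set U : Set α := unionList T with hU
    have hUE : U ⊆ M.E := hME ▸ (iUnion₂_subset fun Z hZ => hXE Z (hT.1 Z hZ))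
    have hYX : Y ∈ X := hS.1 Y (by simp)
    have hC := hcirc Y hYX
    have hYE : Y ⊆ M.E := hC.1
    have hUYE : U ∪ Y ⊆ M.E := union_subset hUE hYE
    obtain ⟨J0, hJ0⟩ := M.exists_isBasis U hUE
    obtain ⟨J1, hJ1, hsub⟩ := hJ0.indep.subset_isBasis_of_subset
      (hJ0.subset.trans subset_union_left) hUYE
    have hdep : M.Dep Y := ⟨hC.2.1, hC.1⟩
    -- Y \ U is nonempty
    have hne : (Y \ U).Nonempty := by
      rcases Nat.eq_zero_or_pos T.length with h0 | h0
      · rw [List.length_eq_zero_iff] at h0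
        subst h0
        have hUe : U = ∅ := by simp [hU, unionList]
        rw [hUe, diff_empty]
        exact hdep.nonempty
      · obtain ⟨e, he, heU⟩ := not_subset.mp (properSeq_last hS h0)
        exact ⟨e, he, heU⟩
    -- Y \ U is not contained in J1
    have hnotsub : ¬ (Y \ U ⊆ J1) := by
      intro hsubJ
      obtain ⟨e, heY, heU⟩ := hne
      have heJ1 : e ∈ J1 := hsubJ ⟨heY, heU⟩
      have hYe : M.Indep (Y \ {e}) := hC.2.2 e heY
      have hecl : e ∈ M.closure (Y \ {e}) := by
        rw [hYe.mem_closure_iff_of_notMem (by simp)]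
        rwa [insert_diff_singleton, insert_eq_of_mem heY]
      have heJ0 : e ∉ J0 := fun h => heU (hJ0.subset h)
      have hJe : J0 ⊆ J1 \ {e} := fun x hx => ⟨hsub hx, fun hxe => heJ0 (hxe ▸ hx)⟩
      have hYsub : Y \ {e} ⊆ M.closure (J1 \ {e}) := by
        intro x hx
        by_cases hxU : x ∈ U
        · exact M.closure_subset_closure hJe (hJ0.subset_closure hxU)
        · exact M.mem_closure_of_mem ⟨hsubJ ⟨hx.1, hxU⟩, hx.2⟩
            ((diff_subset.trans hJ1.indep.subset_ground))
      have hecl1 : e ∈ M.closure (J1 \ {e}) :=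
        M.closure_subset_closure_of_subset_closure hYsub hecl
      have hJ1e : M.Indep (J1 \ {e}) := hJ1.indep.subset diff_subset
      rw [hJ1e.mem_closure_iff_of_notMem (by simp)] at hecl1
      rw [insert_diff_singleton, insert_eq_of_mem heJ1] at hecl1
      exact hecl1.not_indep hJ1.indep
    obtain ⟨f, hfYU, hfJ1⟩ := not_subset.mp hnotsub
    -- J1 \ J0 ⊆ (Y \ U) \ {f}
    have hdiff : J1 \ J0 ⊆ (Y \ U) \ {f} := by
      rintro x ⟨hxJ1, hxJ0⟩
      have hxUY : x ∈ U ∪ Y := hJ1.subset hxJ1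
      have hxU : x ∉ U := by
        intro hxU
        exact hxJ0 (hJ0.mem_of_insert_indep hxU
          (hJ1.indep.subset (insert_subset hxJ1 hsub)))
      refine ⟨⟨hxUY.resolve_left hxU, hxU⟩, fun hxf => hfJ1 (hxf ▸ hxJ1)⟩
    -- arithmetic
    have hIH := ih hT J0 hJ0
    have h1 : (J1 \ J0).encard + J0.encard = J1.encard :=
      encard_diff_add_encard_of_subset hsub
    have h2 : ((Y \ U) \ {f}).encard + 1 = (Y \ U).encard :=
      encard_diff_singleton_add_one hfYU
    have h3 : (U ∪ Y).encard = U.encard + (Y \ U).encard := by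
      rw [← union_diff_self, encard_union_eq disjoint_sdiff_right]
    have hJeq : J'.encard = J1.encard := hJ'.encard_eq_encard hJ1
    have hle : (J1 \ J0).encard ≤ ((Y \ U) \ {f}).encard := encard_le_encard hdiff
    rw [hJeq, List.length_append, List.length_singleton]
    push_cast
    calc J1.encard + (T.length + 1)
        = (J0.encard + T.length) + ((J1 \ J0).encard + 1) := by
          rw [← h1]; ring
      _ ≤ U.encard + (((Y \ U) \ {f}).encard + 1) := by
          exact add_le_add hIH (add_le_add_left hle 1)
      _ = U.encard + (Y \ U).encard := by rw [h2]
      _ = (U ∪ Y).encard := h3.symm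

theorem rank_le_valSeq (E : Set α) (hE : E.Finite) (X : Set (Set α))
    (hXE : ∀ Y ∈ X, Y ⊆ E) (M : Matroid α) (hM : IsXMatroid E X M)
    (F : Set α) (hF : F ⊆ E) (S : List (Set α)) (hS : ProperSeq X S) :
    (mrk M F : ℤ) ≤ valSeq F S := by
  obtain ⟨hME, hcirc⟩ := hM
  set U : Set α := unionList S with hU
  set W : Set α := F ∪ U with hWdef
  have hUE : U ⊆ M.E := hME ▸ (iUnion₂_subset fun Z hZ => hXE Z (hS.1 Z hZ))
  have hWE : W ⊆ M.E := union_subset (hME ▸ hF) hUE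
  have hWfin : W.Finite := hE.subset (hME ▸ hWE)
  obtain ⟨J, hJ⟩ := M.exists_isBasis U hUE
  have hmain : J.encard + S.length ≤ U.encard :=
    basis_encard_add_length_le hXE ⟨hME, hcirc⟩ S hS J hJ
  obtain ⟨JW, hJW, hJJW⟩ := hJ.indep.subset_isBasis_of_subset
    (hJ.subset.trans subset_union_right) hWE
  have hJWdiff : JW \ J ⊆ W \ U := by
    rintro x ⟨hxJW, hxJ⟩
    refine ⟨hJW.subset hxJW, fun hxU => ?_⟩
    exact hxJ (hJ.mem_of_insert_indep hxU (hJW.indep.subset (insert_subset hxJW hJJW)))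
  have hWkey : JW.encard + S.length ≤ W.encard := by
    have h1 : (JW \ J).encard + J.encard = JW.encard :=
      encard_diff_add_encard_of_subset hJJW
    have h2 : (W \ U).encard + U.encard = W.encard :=
      encard_diff_add_encard_of_subset subset_union_right
    calc JW.encard + S.length = (JW \ J).encard + (J.encard + S.length) := by
          rw [← h1]; ring
      _ ≤ (W \ U).encard + U.encard := add_le_add (encard_le_encard hJWdiff) hmain
      _ = W.encard := h2
  -- bound on every independent subset of F
  have hbound : ∀ n ∈ {n : ℕ | ∃ I ⊆ F, M.Indep I ∧ I.ncard = n},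
      n + S.length ≤ W.ncard := by
    rintro n ⟨I, hIF, hI, rfl⟩
    have hIW : I ⊆ W := hIF.trans subset_union_left
    have hIfin : I.Finite := hWfin.subset hIW
    have hIe : I.encard ≤ JW.encard :=
      indep_encard_le_of_subset_closure hI hJW.indep (hIW.trans hJW.subset_closure)
    have : I.encard + S.length ≤ W.encard :=
      le_trans (add_le_add_left hIe _) hWkey
    rw [← hIfin.cast_ncard_eq, ← hWfin.cast_ncard_eq] at this
    exact_mod_cast this
  have hkW : S.length ≤ W.ncard := by
    have := hbound 0 ⟨∅, empty_subset _, M.empty_indep, by simp⟩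
    simpa using this
  have hmrk : mrk M F ≤ W.ncard - S.length := by
    unfold mrk
    refine csSup_le ⟨0, ∅, empty_subset _, M.empty_indep, by simp⟩ fun n hn => ?_
    have := hbound n hn
    omega
  have : (mrk M F : ℤ) ≤ ((W.ncard - S.length : ℕ) : ℤ) := by exact_mod_cast hmrk
  rw [valSeq]
  rw [Nat.cast_sub hkW] at this
  exact this
end

section
/- Let M be an X-matroid on E, F ⊆ E, and S = (X₁,…,X_k) a proper X-sequence with r_M(F) = |F ∪ ⋃ᵢ Xᵢ| − k. Then r_M(F − e) = r_M(F) − 1 for every e ∈ F \ ⋃ᵢ Xᵢ, and r_M(F + e) = r_M(F) for every e ∈ ⋃ᵢ Xᵢ. -/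
open Set

variable {α : Type*}

lemma mrk_bdd {M : Matroid α} {A : Set α} (hAfin : A.Finite) :
    ∀ n ∈ {n : ℕ | ∃ I ⊆ A, M.Indep I ∧ I.ncard = n}, n ≤ A.ncard := by
  rintro n ⟨J, hJA, _, rfl⟩
  exact ncard_le_ncard hJA hAfin

lemma indep_ncard_le_mrk {M : Matroid α} {A J : Set α} (hAfin : A.Finite)
    (hJ : M.Indep J) (hJA : J ⊆ A) : J.ncard ≤ mrk M A :=
  le_csSup ⟨A.ncard, mrk_bdd hAfin⟩ ⟨J, hJA, hJ, rfl⟩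

lemma mrk_eq_of_basis {M : Matroid α} {A I : Set α} (hA : A ⊆ M.E) (hAfin : A.Finite)
    (hI : M.IsBasis I A) : mrk M A = I.ncard := by
  refine le_antisymm (csSup_le ⟨0, ∅, empty_subset _, M.empty_indep, ncard_empty _⟩ ?_)
    (indep_ncard_le_mrk hAfin hI.indep hI.subset)
  rintro n ⟨J, hJA, hJind, rfl⟩
  obtain ⟨J', hJ', hJJ'⟩ := hJind.subset_isBasis_of_subset hJA hA
  have h1 : J.ncard ≤ J'.ncard := ncard_le_ncard hJJ' (hAfin.subset hJ'.subset)
  have h2 : J'.ncard = I.ncard := by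
    rw [Set.ncard_def, Set.ncard_def, hJ'.encard_eq_encard hI]
  omega

lemma mrk_le_ncard {M : Matroid α} {A : Set α} (hAfin : A.Finite) : mrk M A ≤ A.ncard :=
  csSup_le ⟨0, ∅, empty_subset _, M.empty_indep, ncard_empty _⟩ (mrk_bdd hAfin)

lemma mrk_mono {M : Matroid α} {A B : Set α} (hB : B ⊆ M.E) (hBfin : B.Finite)
    (hAB : A ⊆ B) : mrk M A ≤ mrk M B := by
  obtain ⟨I, hI⟩ := M.exists_isBasis A (hAB.trans hB)
  rw [mrk_eq_of_basis (hAB.trans hB) (hBfin.subset hAB) hI]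
  exact indep_ncard_le_mrk hBfin hI.indep (hI.subset.trans hAB)

lemma mrk_le_diff_singleton_add_one {M : Matroid α} {A : Set α} (e : α)
    (hA : A ⊆ M.E) (hAfin : A.Finite) : mrk M A ≤ mrk M (A \ {e}) + 1 := by
  obtain ⟨I, hI⟩ := M.exists_isBasis A hA
  rw [mrk_eq_of_basis hA hAfin hI]
  have h1 : (I \ {e}).ncard ≤ mrk M (A \ {e}) :=
    indep_ncard_le_mrk hAfin.diff (hI.indep.subset diff_subset)
      (diff_subset_diff_left hI.subset)
  have h2 : I.ncard ≤ (I \ {e}).ncard + 1 := by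
    calc I.ncard ≤ (insert e (I \ {e})).ncard :=
          ncard_le_ncard (subset_insert_diff_singleton e I)
            ((hAfin.subset hI.subset).diff.insert e)
      _ ≤ (I \ {e}).ncard + 1 := ncard_insert_le _ _
  omega

lemma mrk_eq_diff_singleton {M : Matroid α} {A : Set α} {e : α}
    (hA : A ⊆ M.E) (hAfin : A.Finite) (he : e ∈ M.closure (A \ {e})) :
    mrk M A = mrk M (A \ {e}) := by
  obtain ⟨I, hI⟩ := M.exists_isBasis (A \ {e}) (diff_subset.trans hA)
  have hsub : A ⊆ M.closure I := by
    rw [hI.closure_eq_closure]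
    intro x hx
    rcases eq_or_ne x e with rfl | hne
    · exact he
    · exact M.subset_closure (A \ {e}) (diff_subset.trans hA) ⟨hx, hne⟩
  have hIA : M.IsBasis I A :=
    hI.indep.isBasis_of_subset_of_subset_closure (hI.subset.trans diff_subset) hsub
  rw [mrk_eq_of_basis hA hAfin hIA,
    mrk_eq_of_basis (diff_subset.trans hA) hAfin.diff hI]

lemma Matroid.IsCircuit'.mem_closure {M : Matroid α} {C : Set α} (hC : M.IsCircuit' C)
    {e : α} (he : e ∈ C) : e ∈ M.closure (C \ {e}) := by
  rw [(hC.2.2 e he).mem_closure_iff]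
  left
  rw [insert_diff_singleton, insert_eq_self.mpr he]
  exact ⟨hC.2.1, hC.1⟩

lemma key_lemma {M : Matroid α} :
    ∀ (S : List (Set α)), (∀ Y ∈ S, M.IsCircuit' Y) →
    (∀ i : Fin S.length, 0 < i.1 → ¬ (S.get i ⊆ unionList (S.take i.1))) →
    ∀ B, unionList S ⊆ B → B ⊆ M.E → B.Finite →
    mrk M B + S.length ≤ B.ncard := by
  intro S
  induction S using List.reverseRecOn with
  | nil =>
    intro _ _ B _ _ hBfin
    simpa using mrk_le_ncard hBfin
  | append_singleton T C ih =>
    intro hcirc hprop B hUB hBE hBfin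
    have hCc : M.IsCircuit' C := hcirc C (by simp)
    have hCB : C ⊆ B := fun x hx => hUB (by
      simp only [unionList, mem_iUnion]
      exact ⟨C, by simp, hx⟩)
    have hTB : unionList T ⊆ B := fun x hx => hUB (by
      simp only [unionList, mem_iUnion, List.mem_append] at hx ⊢
      obtain ⟨Y, hY, hxY⟩ := hx
      exact ⟨Y, Or.inl hY, hxY⟩)
    have hnot : ¬ C ⊆ unionList T := by
      rcases Nat.eq_zero_or_pos T.length with h0 | hpos
      · have hT : T = [] := List.length_eq_zero_iff.mp h0
        subst hT
        intro hsub
        have hCe : C = ∅ := by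
          simpa [unionList, subset_empty_iff] using hsub
        exact hCc.2.1 (hCe ▸ M.empty_indep)
      · have := hprop ⟨T.length, by simp⟩ hpos
        simpa using this
    obtain ⟨e, heC, heT⟩ := not_subset.mp hnot
    have heB : e ∈ B := hCB heC
    have hecl : e ∈ M.closure (B \ {e}) :=
      M.closure_subset_closure (diff_subset_diff_left hCB) (hCc.mem_closure heC)
    have hrw : mrk M B = mrk M (B \ {e}) := mrk_eq_diff_singleton hBE hBfin hecl
    have hih : mrk M (B \ {e}) + T.length ≤ (B \ {e}).ncard := by
      refine ih (fun Y hY => hcirc Y (by simp [hY])) ?_ (B \ {e}) ?_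
        (diff_subset.trans hBE) hBfin.diff
      · intro i hi
        have := hprop ⟨i.1, by simp⟩ hi
        simp only [List.get_eq_getElem] at this ⊢
        rwa [List.getElem_append_left i.2, List.take_append_of_le_length i.2.le] at this
      · intro x hx
        exact ⟨hTB hx, fun hxe => heT (hxe ▸ hx)⟩
    have hcard : (B \ {e}).ncard = B.ncard - 1 := ncard_diff_singleton_of_mem heB
    have hpos : 1 ≤ B.ncard := by
      have : ({e} : Set α).ncard ≤ B.ncard := ncard_le_ncard (by simpa) hBfin
      simpa using this
    simp only [List.length_append, List.length_singleton]
    omega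

theorem rank_eq_valSeq_consequences (E : Set α) (hE : E.Finite) (X : Set (Set α))
    (hXE : ∀ Y ∈ X, Y ⊆ E) (M : Matroid α) (hM : IsXMatroid E X M)
    (F : Set α) (hF : F ⊆ E) (S : List (Set α)) (hS : ProperSeq X S)
    (heq : (mrk M F : ℤ) = valSeq F S) :
    (∀ e ∈ F \ unionList S, (mrk M (F \ {e}) : ℤ) = (mrk M F : ℤ) - 1) ∧
    (∀ e ∈ unionList S, mrk M (insert e F) = mrk M F) := by
  obtain ⟨hME, hMX⟩ := hM
  set U := unionList S with hU
  have hUE : U ⊆ M.E := by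
    rw [hME]
    intro x hx
    simp only [hU, unionList, mem_iUnion] at hx
    obtain ⟨Y, hYS, hxY⟩ := hx
    exact hXE Y (hS.1 Y hYS) hxY
  have hFE : F ⊆ M.E := hME ▸ hF
  have hEfin : M.E.Finite := hME ▸ hE
  have hFUfin : (F ∪ U).Finite := hEfin.subset (union_subset hFE hUE)
  have hcirc : ∀ Y ∈ S, M.IsCircuit' Y := fun Y hY => hMX Y (hS.1 Y hY)
  have keyFU : mrk M (F ∪ U) + S.length ≤ (F ∪ U).ncard :=
    key_lemma S hcirc hS.2 _ subset_union_right (union_subset hFE hUE) hFUfin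
  have hmono : mrk M F ≤ mrk M (F ∪ U) :=
    mrk_mono (union_subset hFE hUE) hFUfin subset_union_left
  simp only [valSeq] at heq
  rw [← hU] at heq
  constructor
  · rintro e ⟨heF, heU⟩
    have hBeq : (F \ {e}) ∪ U = (F ∪ U) \ {e} := by
      rw [union_diff_distrib, diff_singleton_eq_self heU]
    have hBsub : (F \ {e}) ∪ U ⊆ F ∪ U := union_subset_union_left U diff_subset
    have keyB : mrk M ((F \ {e}) ∪ U) + S.length ≤ ((F \ {e}) ∪ U).ncard :=
      key_lemma S hcirc hS.2 _ subset_union_right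
        (union_subset (diff_subset.trans hFE) hUE) (hFUfin.subset hBsub)
    have hcard : ((F \ {e}) ∪ U).ncard = (F ∪ U).ncard - 1 := by
      rw [hBeq]; exact ncard_diff_singleton_of_mem (Or.inl heF)
    have hpos : 1 ≤ (F ∪ U).ncard := (ncard_pos hFUfin).mpr ⟨e, Or.inl heF⟩
    have h1 : mrk M (F \ {e}) ≤ mrk M ((F \ {e}) ∪ U) :=
      mrk_mono (union_subset (diff_subset.trans hFE) hUE) (hFUfin.subset hBsub)
        subset_union_left
    have h2 : mrk M F ≤ mrk M (F \ {e}) + 1 :=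
      mrk_le_diff_singleton_add_one e hFE (hEfin.subset hFE)
    omega
  · intro e heU
    have hiFE : insert e F ⊆ M.E := insert_subset (hUE heU) hFE
    have h1 : mrk M F ≤ mrk M (insert e F) :=
      mrk_mono hiFE (hEfin.subset hiFE) (subset_insert _ _)
    have h2 : mrk M (insert e F) ≤ mrk M (F ∪ U) :=
      mrk_mono (union_subset hFE hUE) hFUfin (insert_subset (Or.inr heU) subset_union_left)
    omega
end
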